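/- Let (A_k) be a sequence of bounded operators on L²(ℝ) with ‖A_k‖ ≤ 1, and let (Λ_k) be pairwise disjoint measurable subsets of ℝ such that for all f: ‖A_k f‖ ≤ ‖P_{Λ_k} f‖ + 2^{−k}‖f‖ and ‖P_{ℝ∖Λ_k} A_k f‖ ≤ 2^{−k}‖f‖, where P_E is the projection onto L²(E). Then the partial sums Σ_{k=1}^n A_k converge in the strong operator topology to a bounded operator A with ‖A‖ bounded by a universal constant. -/

import Mathlib

open MeasureTheory Complex Filter Set

noncomputable section

abbrev L2 : Type := Lp ℂ 2 (volume : Measure ℝ)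

/-- Pythagoras for a pairwise-orthogonal finite family. -/
lemma pyth_sum {E : Type*} [NormedAddCommGroup E] [InnerProductSpace ℂ E]
    {ι : Type*} (s : Finset ι) (v : ι → E)
    (h : ∀ i ∈ s, ∀ j ∈ s, i ≠ j → (inner ℂ (v i) (v j) : ℂ) = 0) :
    ‖∑ i ∈ s, v i‖ ^ 2 = ∑ i ∈ s, ‖v i‖ ^ 2 := by
  classical
  induction s using Finset.cons_induction with
  | empty => simp
  | cons a s ha ih =>
    rw [Finset.sum_cons, Finset.sum_cons]
    have horth : (inner ℂ (v a) (∑ i ∈ s, v i) : ℂ) = 0 := by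
      rw [inner_sum]
      refine Finset.sum_eq_zero fun j hj => ?_
      exact h a (Finset.mem_cons_self a s) j (Finset.mem_cons_of_mem hj)
        (fun haj => ha (haj ▸ hj))
    rw [norm_add_sq (𝕜 := ℂ), horth,
      ih (fun i hi j hj hij => h i (Finset.mem_cons_of_mem hi) j (Finset.mem_cons_of_mem hj) hij)]
    simp

/-- The a.e.-representative of a finite sum in `Lp` is the sum of representatives. -/
lemma Lp_coeFn_sum {α E : Type*} [MeasurableSpace α] {μ : Measure α}
    [NormedAddCommGroup E] {p : ENNReal} {ι : Type*} (s : Finset ι) (g : ι → Lp E p μ) :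
    ⇑(∑ i ∈ s, g i) =ᵐ[μ] fun x => ∑ i ∈ s, g i x := by
  classical
  induction s using Finset.cons_induction with
  | empty => simp only [Finset.sum_empty]; exact Lp.coeFn_zero E p μ
  | cons a s ha ih =>
    simp only [Finset.sum_cons]
    filter_upwards [Lp.coeFn_add (g a) (∑ i ∈ s, g i), ih] with x h1 h2
    rw [h1, Pi.add_apply, h2]

/-- Monotonicity of the `Lp` norm under a.e. pointwise domination. -/
lemma Lp_norm_mono {α E F : Type*} [MeasurableSpace α] {μ : Measure α}
    [NormedAddCommGroup E] [NormedAddCommGroup F] {p : ENNReal}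
    (f : Lp E p μ) (g : Lp F p μ) (h : ∀ᵐ x ∂μ, ‖f x‖ ≤ ‖g x‖) : ‖f‖ ≤ ‖g‖ := by
  rw [Lp.norm_def, Lp.norm_def]
  exact ENNReal.toReal_mono (Lp.eLpNorm_ne_top g) (eLpNorm_mono_ae h)

/-- A geometric sum over `Icc 1 n` is bounded by `(1-ρ)⁻¹ - 1`. -/
lemma geom_Icc_le {ρ : ℝ} (h0 : 0 ≤ ρ) (h1 : ρ < 1) (n : ℕ) :
    ∑ k ∈ Finset.Icc 1 n, ρ ^ k ≤ (1 - ρ)⁻¹ - 1 := by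
  have hIcc : Finset.Icc 1 n = (Finset.range (n + 1)).erase 0 := by
    ext k
    simp [Nat.lt_succ_iff, Nat.one_le_iff_ne_zero]
  rw [hIcc, Finset.sum_erase_eq_sub (by simp)]
  have hle : ∑ k ∈ Finset.range (n + 1), ρ ^ k ≤ (1 - ρ)⁻¹ := by
    rw [← tsum_geometric_of_lt_one h0 h1]
    exact Summable.sum_le_tsum _ (fun i _ => pow_nonneg h0 i) (summable_geometric_of_lt_one h0 h1)
  simp only [pow_zero]
  linarith

set_option maxHeartbeats 2000000 in
theorem approximately_orthogonal_sum_converges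
    (A : ℕ → L2 →L[ℂ] L2) (Λ : ℕ → Set ℝ)
    (hmeas : ∀ k, MeasurableSet (Λ k))
    (hdisj : Pairwise (Function.onFun Disjoint Λ))
    (hA : ∀ k, ‖A k‖ ≤ 1)
    (P Pc : ℕ → L2 →L[ℂ] L2)
    (hP : ∀ k, ∀ f : L2, ⇑(P k f) =ᵐ[volume] Set.indicator (Λ k) ⇑f)
    (hPc : ∀ k, ∀ f : L2, ⇑(Pc k f) =ᵐ[volume] Set.indicator (Λ k)ᶜ ⇑f)
    (h1 : ∀ k, ∀ f : L2, ‖A k f‖ ≤ ‖P k f‖ + ((2 : ℝ)⁻¹) ^ k * ‖f‖)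
    (h2 : ∀ k, ∀ f : L2, ‖Pc k (A k f)‖ ≤ ((2 : ℝ)⁻¹) ^ k * ‖f‖) :
    ∃ B : L2 →L[ℂ] L2, ‖B‖ ^ 2 ≤ 10 ∧
      ∀ f : L2, Tendsto (fun n : ℕ => ∑ k ∈ Finset.Icc 1 n, A k f) atTop (nhds (B f)) := by
  classical
  -- `P k` is a contraction
  have hPle : ∀ (k : ℕ) (g : L2), ‖P k g‖ ≤ ‖g‖ := by
    intro k g
    refine Lp_norm_mono _ _ ?_
    filter_upwards [hP k g] with x hx
    rw [hx]
    exact norm_indicator_le_norm_self _ _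
  -- the ranges of the `P k` are pairwise orthogonal
  have horth : ∀ (j k : ℕ), j ≠ k → ∀ (u v : L2), (inner ℂ (P j u) (P k v) : ℂ) = 0 := by
    intro j k hjk u v
    rw [L2.inner_def]
    refine integral_eq_zero_of_ae ?_
    filter_upwards [hP j u, hP k v] with x hxu hxv
    rw [Pi.zero_apply, hxu, hxv]
    by_cases hx : x ∈ Λ j
    · have hx' : x ∉ Λ k := Set.disjoint_left.mp (hdisj hjk) hx
      rw [Set.indicator_of_notMem hx']
      exact inner_zero_right _
    · rw [Set.indicator_of_notMem hx]
      exact inner_zero_left _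
  -- decomposition `g = P k g + Pc k g`
  have hdecomp : ∀ (k : ℕ) (g : L2), P k g + Pc k g = g := by
    intro k g
    apply Lp.ext
    filter_upwards [Lp.coeFn_add (P k g) (Pc k g), hP k g, hPc k g] with x hadd hx hxc
    rw [hadd, Pi.add_apply, hx, hxc]
    exact congrFun (Set.indicator_self_add_compl (Λ k) ⇑g) x
  -- norm of a sum of projections is at most the norm
  have hsumP : ∀ (g : L2) (s : Finset ℕ), ‖∑ k ∈ s, P k g‖ ≤ ‖g‖ := by
    intro g s
    refine Lp_norm_mono _ _ ?_
    have hall : ∀ᵐ x ∂(volume : Measure ℝ), ∀ k ∈ s, ⇑(P k g) x = (Λ k).indicator ⇑g x :=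
      (Filter.eventually_all_finset s).mpr fun k _ => hP k g
    filter_upwards [Lp_coeFn_sum s (fun k => P k g), hall] with x hx0 hx1
    rw [hx0, Finset.sum_congr rfl fun k hk => hx1 k hk]
    by_cases hmem : ∃ j ∈ s, x ∈ Λ j
    · obtain ⟨j, hj, hxj⟩ := hmem
      rw [Finset.sum_eq_single_of_mem j hj (fun k hk hkj =>
        Set.indicator_of_notMem (fun hxk => Set.disjoint_left.mp (hdisj hkj) hxk hxj) _),
        Set.indicator_of_mem hxj]
    · push_neg at hmem
      rw [Finset.sum_eq_zero fun k hk => Set.indicator_of_notMem (hmem k hk) _]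
      simp
  -- Bessel-type inequality
  have hbessel : ∀ (g : L2) (s : Finset ℕ), ∑ k ∈ s, ‖P k g‖ ^ 2 ≤ ‖g‖ ^ 2 := by
    intro g s
    rw [← pyth_sum s (fun k => P k g) (fun i _ j _ hij => horth i j hij g g)]
    exact pow_le_pow_left₀ (norm_nonneg _) (hsumP g s) 2
  -- key estimate for an arbitrary finite sum
  have claim1 : ∀ (f : L2) (s : Finset ℕ),
      ‖∑ k ∈ s, A k f‖ ≤
        Real.sqrt (∑ k ∈ s, (‖P k f‖ + ((2:ℝ)⁻¹) ^ k * ‖f‖) ^ 2)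
          + ∑ k ∈ s, ((2:ℝ)⁻¹) ^ k * ‖f‖ := by
    intro f s
    have hsplit : ∑ k ∈ s, A k f = (∑ k ∈ s, P k (A k f)) + ∑ k ∈ s, Pc k (A k f) := by
      rw [← Finset.sum_add_distrib]
      exact Finset.sum_congr rfl fun k _ => (hdecomp k (A k f)).symm
    rw [hsplit]
    refine (norm_add_le _ _).trans (add_le_add ?_ ?_)
    · have hpy : ‖∑ k ∈ s, P k (A k f)‖ ^ 2 = ∑ k ∈ s, ‖P k (A k f)‖ ^ 2 :=
        pyth_sum s _ (fun i _ j _ hij => horth i j hij _ _)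
      have heq : ‖∑ k ∈ s, P k (A k f)‖ = Real.sqrt (∑ k ∈ s, ‖P k (A k f)‖ ^ 2) := by
        rw [← hpy, Real.sqrt_sq (norm_nonneg _)]
      rw [heq]
      apply Real.sqrt_le_sqrt
      refine Finset.sum_le_sum fun k _ => ?_
      exact pow_le_pow_left₀ (norm_nonneg _) ((hPle k (A k f)).trans (h1 k f)) 2
    · exact (norm_sum_le _ _).trans (Finset.sum_le_sum fun k _ => h2 k f)
  -- summability facts
  have hsq : ∀ (f : L2) (k : ℕ), (((2:ℝ)⁻¹) ^ k * ‖f‖) ^ 2 = ((4:ℝ)⁻¹) ^ k * ‖f‖ ^ 2 := by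
    intro f k
    rw [mul_pow, ← pow_mul, mul_comm k 2, pow_mul]
    norm_num
  have hu2 : ∀ f : L2, Summable (fun k => ‖P k f‖ ^ 2) := by
    intro f
    exact summable_of_sum_range_le (fun n => sq_nonneg _) (fun n => hbessel f (Finset.range n))
  have hw : ∀ f : L2, Summable (fun k => ((2:ℝ)⁻¹) ^ k * ‖f‖) :=
    fun f => (summable_geometric_of_lt_one (by norm_num) (by norm_num)).mul_right _
  have hw2 : ∀ f : L2, Summable (fun k => (((2:ℝ)⁻¹) ^ k * ‖f‖) ^ 2) := by
    intro f
    simp_rw [hsq f]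
    exact (summable_geometric_of_lt_one (by norm_num) (by norm_num)).mul_right _
  have hD : ∀ f : L2, Summable (fun k => (‖P k f‖ + ((2:ℝ)⁻¹) ^ k * ‖f‖) ^ 2) := by
    intro f
    refine Summable.of_nonneg_of_le (fun k => sq_nonneg _) (fun k => ?_)
      (((hu2 f).mul_left 2).add ((hw2 f).mul_left 2))
    nlinarith [sq_nonneg (‖P k f‖ - ((2:ℝ)⁻¹) ^ k * ‖f‖)]
  -- summability of `∑ A k f`
  have hsummable : ∀ f : L2, Summable (fun k => A k f) := by
    intro f
    rw [summable_iff_vanishing_norm]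
    intro ε hε
    have hδ : (0:ℝ) < min ((ε/3)^2) (ε/3) := lt_min (by positivity) (by positivity)
    obtain ⟨s₁, hs₁⟩ := summable_iff_vanishing_norm.mp (hD f) _ hδ
    obtain ⟨s₂, hs₂⟩ := summable_iff_vanishing_norm.mp (hw f) _ hδ
    refine ⟨s₁ ∪ s₂, fun t ht => ?_⟩
    obtain ⟨ht₁, ht₂⟩ := Finset.disjoint_union_right.mp ht
    have hDt : ∑ k ∈ t, (‖P k f‖ + ((2:ℝ)⁻¹) ^ k * ‖f‖) ^ 2 ≤ (ε/3)^2 :=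
      ((le_abs_self _).trans_lt (by simpa [Real.norm_eq_abs] using hs₁ t ht₁)).le.trans
        (min_le_left _ _)
    have hwt : ∑ k ∈ t, ((2:ℝ)⁻¹) ^ k * ‖f‖ ≤ ε/3 :=
      ((le_abs_self _).trans_lt (by simpa [Real.norm_eq_abs] using hs₂ t ht₂)).le.trans
        (min_le_right _ _)
    calc ‖∑ k ∈ t, A k f‖
        ≤ Real.sqrt (∑ k ∈ t, (‖P k f‖ + ((2:ℝ)⁻¹) ^ k * ‖f‖) ^ 2)
            + ∑ k ∈ t, ((2:ℝ)⁻¹) ^ k * ‖f‖ := claim1 f t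
      _ ≤ Real.sqrt ((ε/3)^2) + ε/3 := add_le_add (Real.sqrt_le_sqrt hDt) hwt
      _ = ε/3 + ε/3 := by rw [Real.sqrt_sq (by positivity)]
      _ < ε := by linarith
  -- convergence of the partial sums over `Icc 1 n`
  have htend : ∀ f : L2, Tendsto (fun n : ℕ => ∑ k ∈ Finset.Icc 1 n, A k f) atTop
      (nhds ((∑' k, A k f) - A 0 f)) := by
    intro f
    have h0 := (hsummable f).hasSum.tendsto_sum_nat
    have h1' : Tendsto (fun n : ℕ => ∑ k ∈ Finset.range (n+1), A k f) atTop
        (nhds (∑' k, A k f)) := h0.comp (tendsto_add_atTop_nat 1)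
    refine (h1'.sub_const (A 0 f)).congr fun n => ?_
    have hIcc : Finset.Icc 1 n = (Finset.range (n + 1)).erase 0 := by
      ext k
      simp [Nat.lt_succ_iff, Nat.one_le_iff_ne_zero]
    rw [hIcc, Finset.sum_erase_eq_sub (by simp)]
  -- uniform bound on the partial sums
  have hSbound : ∀ (f : L2) (n : ℕ),
      ‖∑ k ∈ Finset.Icc 1 n, A k f‖ ≤ (Real.sqrt (8/3) + 1) * ‖f‖ := by
    intro f n
    have hc := claim1 f (Finset.Icc 1 n)
    have hg4 : ∑ k ∈ Finset.Icc 1 n, ((4:ℝ)⁻¹) ^ k ≤ 3⁻¹ := by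
      have := geom_Icc_le (ρ := (4:ℝ)⁻¹) (by norm_num) (by norm_num) n
      norm_num at this ⊢
      linarith
    have hg2 : ∑ k ∈ Finset.Icc 1 n, ((2:ℝ)⁻¹) ^ k ≤ 1 := by
      have := geom_Icc_le (ρ := (2:ℝ)⁻¹) (by norm_num) (by norm_num) n
      norm_num at this ⊢
      linarith
    have hDle : ∑ k ∈ Finset.Icc 1 n, (‖P k f‖ + ((2:ℝ)⁻¹) ^ k * ‖f‖) ^ 2
        ≤ (8/3) * ‖f‖ ^ 2 := by
      have step : ∑ k ∈ Finset.Icc 1 n, (‖P k f‖ + ((2:ℝ)⁻¹) ^ k * ‖f‖) ^ 2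
          ≤ ∑ k ∈ Finset.Icc 1 n, (2 * ‖P k f‖ ^ 2 + 2 * (((4:ℝ)⁻¹) ^ k * ‖f‖ ^ 2)) := by
        refine Finset.sum_le_sum fun k _ => ?_
        have := hsq f k
        nlinarith [sq_nonneg (‖P k f‖ - ((2:ℝ)⁻¹) ^ k * ‖f‖)]
      refine step.trans ?_
      rw [Finset.sum_add_distrib, ← Finset.mul_sum, ← Finset.mul_sum, ← Finset.sum_mul]
      have b1 : 2 * ∑ k ∈ Finset.Icc 1 n, ‖P k f‖ ^ 2 ≤ 2 * ‖f‖ ^ 2 := by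
        have := hbessel f (Finset.Icc 1 n); linarith
      have b2 : 2 * ((∑ k ∈ Finset.Icc 1 n, ((4:ℝ)⁻¹) ^ k) * ‖f‖ ^ 2)
          ≤ 2 * (3⁻¹ * ‖f‖ ^ 2) := by
        have h0 : (0:ℝ) ≤ ‖f‖ ^ 2 := sq_nonneg _
        nlinarith
      nlinarith
    have hwle : ∑ k ∈ Finset.Icc 1 n, ((2:ℝ)⁻¹) ^ k * ‖f‖ ≤ ‖f‖ := by
      rw [← Finset.sum_mul]
      have h0 : (0:ℝ) ≤ ‖f‖ := norm_nonneg _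
      nlinarith
    have hsqrt : Real.sqrt ((8/3) * ‖f‖ ^ 2) = Real.sqrt (8/3) * ‖f‖ := by
      rw [Real.sqrt_mul (by norm_num), Real.sqrt_sq (norm_nonneg _)]
    calc ‖∑ k ∈ Finset.Icc 1 n, A k f‖
        ≤ Real.sqrt (∑ k ∈ Finset.Icc 1 n, (‖P k f‖ + ((2:ℝ)⁻¹) ^ k * ‖f‖) ^ 2)
            + ∑ k ∈ Finset.Icc 1 n, ((2:ℝ)⁻¹) ^ k * ‖f‖ := hc
      _ ≤ Real.sqrt ((8/3) * ‖f‖ ^ 2) + ‖f‖ := add_le_add (Real.sqrt_le_sqrt hDle) hwle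
      _ = (Real.sqrt (8/3) + 1) * ‖f‖ := by rw [hsqrt]; ring
  -- construct the limit operator
  have hadd : ∀ f g : L2, ((∑' k, A k (f + g)) - A 0 (f + g))
      = ((∑' k, A k f) - A 0 f) + ((∑' k, A k g) - A 0 g) := by
    intro f g
    refine tendsto_nhds_unique (htend (f + g)) ?_
    refine (((htend f).add (htend g)).congr fun n => ?_)
    simp [map_add, Finset.sum_add_distrib]
  have hsmul : ∀ (c : ℂ) (f : L2), ((∑' k, A k (c • f)) - A 0 (c • f))
      = c • ((∑' k, A k f) - A 0 f) := by
    intro c f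
    refine tendsto_nhds_unique (htend (c • f)) ?_
    refine (((htend f).const_smul c).congr fun n => ?_)
    simp [_root_.map_smul, Finset.smul_sum]
  let Blin : L2 →ₗ[ℂ] L2 :=
    { toFun := fun f => (∑' k, A k f) - A 0 f
      map_add' := hadd
      map_smul' := hsmul }
  have hBb : ∀ f : L2, ‖Blin f‖ ≤ (Real.sqrt (8/3) + 1) * ‖f‖ := by
    intro f
    exact le_of_tendsto ((htend f).norm) (Eventually.of_forall (hSbound f))
  refine ⟨LinearMap.mkContinuous Blin (Real.sqrt (8/3) + 1) hBb, ?_, fun f => htend f⟩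
  have hn : ‖LinearMap.mkContinuous Blin (Real.sqrt (8/3) + 1) hBb‖ ≤ Real.sqrt (8/3) + 1 :=
    LinearMap.mkContinuous_norm_le Blin (by positivity) hBb
  have hs : Real.sqrt (8/3) ^ 2 = 8/3 := Real.sq_sqrt (by norm_num)
  have h0 : (0:ℝ) ≤ Real.sqrt (8/3) := Real.sqrt_nonneg _
  nlinarith [norm_nonneg (LinearMap.mkContinuous Blin (Real.sqrt (8/3) + 1) hBb),
    sq_nonneg (Real.sqrt (8/3) - 2)]
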